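/- Let d ≥ 2 and let n ∈ {0,1,…,d−2}. Every sequence of 2^n consecutive edges of a well-folded hyperorthogonal curve on the grid in ℤ^d lies inside an (n+1)-dimensional unit cube, i.e., inside an axis-aligned box whose side has length 1 in exactly n+1 coordinates and length 0 in the remaining d−n−1 coordinates. -/

import Mathlib

open MeasureTheory

/-! ## Basic objects: points of `ℤ^d` (indexed by coordinates `1,…,d`), directions,
Gray codes, curves on the grid, inflation, well-foldedness, hyperorthogonality. -/

/-- A point of the grid `ℤ^d`; only coordinates `1,…,d` are meaningful
(coordinate `0` and coordinates `> d` are kept equal to `0`). -/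
abbrev Pt : Type := ℕ → ℤ

def ptZero : Pt := fun _ => 0

/-- `flipped i = 1` if `i < 0`, and `0` otherwise. -/
def flipped (i : ℤ) : ℤ := if i < 0 then 1 else 0

/-- Reversal of a free curve (sequence of directions): reverse the order and
negate every direction. -/
def grayRev (l : List ℤ) : List ℤ := (l.map (fun x => -x)).reverse

/-- The Gray-code free curve `G(d)`: `G(0)` is empty and `G(d)` is the
concatenation of `G(d-1)`, the single direction `d`, and the reverse of `G(d-1)`. -/
def G : ℕ → List ℤ
  | 0 => []
  | d + 1 => G d ++ [((d : ℤ) + 1)] ++ grayRev (G d)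

/-- Moving a point one step in direction `e`: coordinate `|e|` changes by `sgn e`. -/
def move (v : Pt) (e : ℤ) : Pt := fun j => if j = e.natAbs then v j + e.sign else v j

/-- The vertices of the path starting at `start` whose successive edge
directions are given by `dirs`. -/
def pathVertices (start : Pt) (dirs : List ℤ) : List Pt := dirs.scanl move start

/-- `e` is a valid direction in `d` dimensions: `e ∈ {−d,…,−1,1,…,d}`. -/
def IsDir (d : ℕ) (e : ℤ) : Prop := e ≠ 0 ∧ e.natAbs ≤ d

/-- The (ordered) pair `(v,w)` is an edge with direction `e`. -/
def HasDir (d : ℕ) (v w : Pt) (e : ℤ) : Prop := IsDir d e ∧ w = move v e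

/-- `(v,w)` is an edge of the grid. -/
def IsEdge (d : ℕ) (v w : Pt) : Prop := ∃ e, HasDir d v w e

/-- A curve on the grid: a finite sequence of distinct points in which each pair of
consecutive points differs by `±1` in exactly one coordinate. -/
def IsGridCurve (d : ℕ) (c : List Pt) : Prop := c.Nodup ∧ c.Chain' (IsEdge d)

/-- Membership in the cube `{0,…,2^k−1}^d` (unused coordinates are `0`). -/
def InCube (d k : ℕ) (v : Pt) : Prop :=
  (∀ j, 1 ≤ j → j ≤ d → 0 ≤ v j ∧ v j < 2 ^ k) ∧ (∀ j, j = 0 ∨ d < j → v j = 0)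

/-- A `k`-curve: a Hamiltonian path on the grid `{0,…,2^k−1}^d`. -/
def IsKCurve (d k : ℕ) (c : List Pt) : Prop :=
  IsGridCurve d c ∧ ∀ v : Pt, v ∈ c ↔ InCube d k v

/-- A signed permutation of `{−d,…,−1,1,…,d}`: a bijection `σ` of this set
with `σ(−k) = −σ(k)` (bundled with its inverse). -/
structure SignedPerm (d : ℕ) where
  f : ℤ → ℤ
  inv : ℤ → ℤ
  maps : ∀ i : ℤ, IsDir d i → IsDir d (f i)
  maps_inv : ∀ i : ℤ, IsDir d i → IsDir d (inv i)
  neg : ∀ i : ℤ, f (-i) = -f i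
  neg_inv : ∀ i : ℤ, inv (-i) = -inv i
  left_inv : ∀ i : ℤ, IsDir d i → inv (f i) = i
  right_inv : ∀ i : ℤ, IsDir d i → f (inv i) = i

/-- The 1-curve `σ(G(d))` (an isometric image of the Gray-code curve) placed in the
cube `2·v + {0,1}^d`; its entry corner is forced to be
`2·v + (flipped(σ⁻¹(1)),…,flipped(σ⁻¹(d)))`. -/
def grayPiece (d : ℕ) (σ : SignedPerm d) (v : Pt) : List Pt :=
  pathVertices (fun j => 2 * v j + if 1 ≤ j ∧ j ≤ d then flipped (σ.inv (j : ℤ)) else 0)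
    ((G d).map σ.f)

/-- `B` is obtained from `A` by (well-folded) inflation: each vertex of `A` is
replaced by an isometric image of `G(d)` in the corresponding subcube, and the
result is a valid curve on the grid. (Reversed images of `G(d)` are themselves
images of `G(d)` under another signed permutation, so no generality is lost.) -/
def IsInflationWF (d : ℕ) (A B : List Pt) : Prop :=
  ∃ σ : ℕ → SignedPerm d,
    B = ((List.range A.length).map (fun i => grayPiece d (σ i) (A.getD i ptZero))).flatten ∧
    IsGridCurve d B

/-- A curve is well-folded if it is a single vertex or is obtained by inflation from a
well-folded curve, every inserted 1-curve being an isometric image of `G(d)`. -/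
inductive WellFolded (d : ℕ) : List Pt → Prop
  | single (v : Pt) : WellFolded d [v]
  | inflate {A B : List Pt} : WellFolded d A → IsInflationWF d A B → WellFolded d B

/-- The set of axes in which `v` and `w` differ (for a grid edge this is the
singleton of its axis). -/
def axesOfEdge (d : ℕ) (v w : Pt) : Finset ℕ :=
  (Finset.range (d + 1)).filter (fun j => v j ≠ w j)

/-- Hyperorthogonality: for every `n ∈ {0,…,d−2}`, every `2^n` consecutive
edges of the curve have exactly `n+1` distinct axes. -/
def Hyperorthogonal (d : ℕ) (c : List Pt) : Prop :=
  ∀ n, n ≤ d - 2 → ∀ s, s + 2 ^ n + 1 ≤ c.length →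
    ((Finset.range (2 ^ n)).biUnion
      (fun t => axesOfEdge d (c.getD (s + t) ptZero) (c.getD (s + t + 1) ptZero))).card = n + 1

/-- The depth of a direction `a` in a signed permutation `σ`:
`0` if `|a| ∈ {|σ(d)|,|σ(d−1)|}`, and otherwise the number `j` with `|σ(d−1−j)| = |a|`. -/
def depth (d : ℕ) (σ : SignedPerm d) (a : ℤ) : ℕ :=
  if (σ.inv a).natAbs = d ∨ (σ.inv a).natAbs = d - 1 then 0 else d - 1 - (σ.inv a).natAbs

/-- The (signed) direction of the edge from `v` to `w`
(for a grid edge with axis `j` this is `±j`). -/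
def dirOf (d : ℕ) (v w : Pt) : ℤ :=
  ∑ j ∈ (Finset.range (d + 1)).filter (fun j => v j ≠ w j), (j : ℤ) * (w j - v j)

/-- The axis of the edge from `v` to `w`. -/
def axisOf (d : ℕ) (v w : Pt) : ℕ := (dirOf d v w).natAbs

/-! ## Extended curves -/

/-- For the extended curve with entry-edge direction `en`, vertex list `c` and
exit-edge direction `ex`, the axis of its `t`-th edge, where the entry edge has
index `0`, the internal edges have indices `1,…,c.length − 1` (edge `t` joins
`c[t−1]` and `c[t]`) and the exit edge has index `c.length`. -/
def axE (d : ℕ) (en : ℤ) (c : List Pt) (ex : ℤ) (t : ℕ) : ℕ :=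
  if t = 0 then en.natAbs
  else if t = c.length then ex.natAbs
  else axisOf d (c.getD (t - 1) ptZero) (c.getD t ptZero)

/-- The edge distance of the axis `a` to the vertex with index `p` within the
extended curve `(en, c, ex)`: one less than the number of edges of the smallest
contiguous subcurve containing this vertex and an edge with axis `a`. -/
noncomputable def edgedistE (d : ℕ) (en : ℤ) (c : List Pt) (ex : ℤ) (p a : ℕ) : ℕ :=
  sInf {m | ∃ t, t ≤ c.length ∧ axE d en c ex t = a ∧
    m = if t ≤ p then p - t else t - p - 1}

/-- Hyperorthogonality of an extended curve: every `2^n` consecutive edges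
(including the entry and exit edges) have exactly `n+1` distinct axes, for all
`n ∈ {0,…,d−2}`. -/
def HyperorthogonalE (d : ℕ) (en : ℤ) (c : List Pt) (ex : ℤ) : Prop :=
  ∀ n, n ≤ d - 2 → ∀ s, s + 2 ^ n ≤ c.length + 1 →
    ((Finset.range (2 ^ n)).image (fun t => axE d en c ex (s + t))).card = n + 1

/-- The sequence of approximating curves determined by a system of signed
permutations `σ k i` (one for each vertex `i` of the `k`-th curve):
`A_0` is the single vertex at the origin and `A_{k+1}` is obtained from `A_k` by
inflation, vertex `i` being replaced by the 1-curve `σ_{k,i}(G(d))`. -/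
def buildCurve (d : ℕ) (σ : ℕ → ℕ → SignedPerm d) : ℕ → List Pt
  | 0 => [ptZero]
  | k + 1 =>
    ((List.range (buildCurve d σ k).length).map
      (fun i => grayPiece d (σ k i) ((buildCurve d σ k).getD i ptZero))).flatten

/-- `f : [0,1] → [0,1]^d` is the space-filling curve approximated by the curves
`A k`: the `i`-th vertex of `A k` corresponds to the cube `2^{−k}(v_{k,i} + [0,1]^d)`,
and `f` maps `[i/2^{dk},(i+1)/2^{dk}]` into that cube. -/
def Approximates (d : ℕ) (A : ℕ → List Pt) (f : ℝ → Fin d → ℝ) : Prop :=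
  ∀ k i, i < (A k).length → ∀ t : ℝ,
    (i : ℝ) / 2 ^ (d * k) ≤ t → t ≤ ((i : ℝ) + 1) / 2 ^ (d * k) →
    ∀ j : Fin d,
      ((((A k).getD i ptZero) ((j : ℕ) + 1) : ℝ) / 2 ^ k ≤ f t j ∧
        f t j ≤ ((((A k).getD i ptZero) ((j : ℕ) + 1) : ℝ) + 1) / 2 ^ k)

/-- The smallest axis-aligned box containing a (nonempty, bounded) set `S ⊆ ℝ^d`. -/
noncomputable def bbox (d : ℕ) (S : Set (Fin d → ℝ)) : Set (Fin d → ℝ) :=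
  Set.univ.pi fun j => Set.Icc (sInf ((fun p => p j) '' S)) (sSup ((fun p => p j) '' S))

/-! ## General inflation (arbitrary 1-curves), isometric copies, self-similarity -/

/-- `c` is a 1-curve on the translated unit cube `2·base + {0,1}^d`. -/
def IsUnitCurveAt (d : ℕ) (base : Pt) (c : List Pt) : Prop :=
  IsGridCurve d c ∧
    ∀ v : Pt, v ∈ c ↔
      ((∀ j, 1 ≤ j → j ≤ d → v j = 2 * base j ∨ v j = 2 * base j + 1) ∧
        ∀ j, j = 0 ∨ d < j → v j = 2 * base j)

/-- `B` is obtained from `A` by (general) inflation: each vertex `v_i` of `A` is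
replaced by a 1-curve on `2·v_i + {0,1}^d`, and each edge of `A` with direction `e_i`
is replaced by an edge of the same direction connecting consecutive 1-curves. -/
def IsInflation (d : ℕ) (A B : List Pt) : Prop :=
  ∃ C : ℕ → List Pt,
    B = ((List.range A.length).map C).flatten ∧
    IsGridCurve d B ∧
    (∀ i, i < A.length → IsUnitCurveAt d (A.getD i ptZero) (C i)) ∧
    (∀ i, i + 1 < A.length → ∀ e : ℤ,
      HasDir d (A.getD i ptZero) (A.getD (i + 1) ptZero) e →
      HasDir d ((C i).getLastD ptZero) ((C (i + 1)).headD ptZero) e)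

/-- `InflationChain d k X`: `X` is constructed from a single vertex by `k` steps
of inflation. -/
inductive InflationChain (d : ℕ) : ℕ → List Pt → Prop
  | base (v : Pt) : InflationChain d 0 [v]
  | step {k : ℕ} {A B : List Pt} :
      InflationChain d k A → IsInflation d A B → InflationChain d (k + 1) B

/-- The hyperoctahedral symmetry of the cube `{0,…,M}^d` given by the signed
permutation `σ`: the coordinate `|σ⁻¹(j)|` of the argument is sent to coordinate `j`,
reflected (`x ↦ M − x`) whenever `σ⁻¹(j) < 0`. -/
def applySP (d : ℕ) (M : ℤ) (σ : SignedPerm d) (x : Pt) : Pt :=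
  fun j =>
    if 1 ≤ j ∧ j ≤ d then
      if 0 ≤ σ.inv (j : ℤ) then x (σ.inv (j : ℤ)).natAbs
      else M - x (σ.inv (j : ℤ)).natAbs
    else x j

/-- `B` is an isometric copy of the curve `A` (living in a cube `{0,…,M}^d`):
a hyperoctahedral symmetry, possibly composed with reversal, followed by a translation. -/
def IsometricCopy (d : ℕ) (M : ℤ) (A B : List Pt) : Prop :=
  ∃ σ : SignedPerm d, ∃ rev : Bool, ∃ tr : Pt,
    B = (if rev then A.reverse else A).map (fun v => fun j => applySP d M σ v j + tr j)

/-- Self-similarity of one approximation step: `B` is the concatenation of `2^d`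
isometric copies of the `k`-curve `A`, connected by single edges. -/
def SelfSimilarStep (d k : ℕ) (A B : List Pt) : Prop :=
  ∃ parts : ℕ → List Pt,
    B = ((List.range (2 ^ d)).map parts).flatten ∧
    IsGridCurve d B ∧
    ∀ m, m < 2 ^ d → IsometricCopy d ((2 : ℤ) ^ k - 1) A (parts m)

/-- Coordinate `a ∈ {1,…,d}` of a point of `ℝ^d`. -/
noncomputable def coordR (d : ℕ) (x : Fin d → ℝ) (a : ℕ) : ℝ :=
  if h : a - 1 < d then x ⟨a - 1, h⟩ else 0

/-- The hyperoctahedral symmetry of the unit cube `[0,1]^d` given by the signed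
permutation `σ`. -/
noncomputable def applySPR (d : ℕ) (σ : SignedPerm d) (x : Fin d → ℝ) : Fin d → ℝ :=
  fun j =>
    if 0 ≤ σ.inv ((j : ℕ) + 1 : ℤ) then coordR d x (σ.inv ((j : ℕ) + 1 : ℤ)).natAbs
    else 1 - coordR d x (σ.inv ((j : ℕ) + 1 : ℤ)).natAbs

/-- `f` is a self-similar hyperorthogonal well-folded space-filling curve:
it is approximated by a sequence of `k`-curves, starting from a single vertex,
in which each curve is obtained from the previous one by well-folded inflation,
all approximating curves are hyperorthogonal, and each approximating curve is the
concatenation of `2^d` isometric copies of the previous one. -/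
def SSHOWFcurve (d : ℕ) (f : ℝ → Fin d → ℝ) : Prop :=
  ∃ A : ℕ → List Pt,
    A 0 = [ptZero] ∧
    (∀ k, IsInflationWF d (A k) (A (k + 1))) ∧
    (∀ k, IsKCurve d k (A k)) ∧
    (∀ k, Hyperorthogonal d (A k)) ∧
    (∀ k, SelfSimilarStep d k (A k) (A (k + 1))) ∧
    Approximates d A f

/-- Two space-filling curves are the same up to hyperoctahedral symmetry and
reversal. -/
def curveEquiv (d : ℕ) (f g : ℝ → Fin d → ℝ) : Prop :=
  ∃ τ : SignedPerm d,
    (∀ t ∈ Set.Icc (0 : ℝ) 1, g t = applySPR d τ (f t)) ∨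
    (∀ t ∈ Set.Icc (0 : ℝ) 1, g t = applySPR d τ (f (1 - t)))

/-- The direction of the entry edge of the extended child curve `C'_m` within the
inflation of the extended curve `(e0, A, e1)`. -/
def childEntryDir (d : ℕ) (A : List Pt) (e0 : ℤ) (m : ℕ) : ℤ :=
  if m = 0 then e0 else dirOf d (A.getD (m - 1) ptZero) (A.getD m ptZero)

/-- The direction of the exit edge of the extended child curve `C'_m` within the
inflation of the extended curve `(e0, A, e1)`. -/
def childExitDir (d : ℕ) (A : List Pt) (e1 : ℤ) (m : ℕ) : ℤ :=
  if m + 1 = A.length then e1 else dirOf d (A.getD m ptZero) (A.getD (m + 1) ptZero)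

/-- The local edge distance of the axis `a` to the vertex with index `i` within the
extended approximating curve `A'_k` (entry direction `e0`, exit direction `e1`)
of the system `σ`: the edge distance within the extended child curve of `A'_{k-1}`
containing this vertex. -/
noncomputable def led (d : ℕ) (σ : ℕ → ℕ → SignedPerm d) (e0 e1 : ℤ) :
    ℕ → ℕ → ℕ → ℕ
  | 0, _, a => edgedistE d e0 (buildCurve d σ 0) e1 0 a
  | k + 1, i, a =>
    edgedistE d (childEntryDir d (buildCurve d σ k) e0 (i / 2 ^ d))
      (grayPiece d (σ k (i / 2 ^ d)) ((buildCurve d σ k).getD (i / 2 ^ d) ptZero))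
      (childExitDir d (buildCurve d σ k) e1 (i / 2 ^ d))
      (i % 2 ^ d) a

/-- The system of permutations `σ` describes a sequence of extended hyperorthogonal
well-folded approximating curves with entry direction `e0` and exit direction `e1`,
in which the signs of `σ_{k,1}⁻¹` are prescribed by `s`, and the elements of every
unsigned permutation `|σ_{k,i}|` are sorted by decreasing local edge distance. -/
def GoodSystem (d : ℕ) (e0 e1 : ℤ) (s : ℕ → ℕ → ℤ) (σ : ℕ → ℕ → SignedPerm d) : Prop :=
  (∀ k, IsKCurve d k (buildCurve d σ k)) ∧
  (∀ k, HyperorthogonalE d e0 (buildCurve d σ k) e1) ∧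
  (∀ k, ¬ InCube d k (move ((buildCurve d σ k).headD ptZero) (-e0))) ∧
  (∀ k, ¬ InCube d k (move ((buildCurve d σ k).getLastD ptZero) e1)) ∧
  (∀ k j, 1 ≤ j → j ≤ d → Int.sign ((σ k 0).inv (j : ℤ)) = s k j) ∧
  (∀ k i, i < (buildCurve d σ k).length →
    ∀ p q : ℕ, 1 ≤ p → p ≤ q → q ≤ d →
      led d σ e0 e1 k i (((σ k i).f (q : ℤ)).natAbs) ≤
        led d σ e0 e1 k i (((σ k i).f (p : ℤ)).natAbs))

/-- The Butz-Moore generalization of the Hilbert curve, described by the conditions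
on its system of signed permutations: `|σ_{k,i}(d)| = 1` for the first and last
subcube, `|σ_{k,i}(d)| = max(|e_{k,i−1}|,|e_{k,i}|)` in between, all unsigned
permutations are cyclic rotations, and the entry is at the origin. -/
def ButzMoore (d : ℕ) (σ : ℕ → ℕ → SignedPerm d) : Prop :=
  (∀ k, IsKCurve d k (buildCurve d σ k)) ∧
  (∀ k i, i < 2 ^ (d * k) → (i = 0 ∨ i = 2 ^ (d * k) - 1) →
    ((σ k i).f (d : ℤ)).natAbs = 1) ∧
  (∀ k i, 0 < i → i + 1 < 2 ^ (d * k) →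
    ((σ k i).f (d : ℤ)).natAbs =
      max (dirOf d ((buildCurve d σ k).getD (i - 1) ptZero)
            ((buildCurve d σ k).getD i ptZero)).natAbs
          (dirOf d ((buildCurve d σ k).getD i ptZero)
            ((buildCurve d σ k).getD (i + 1) ptZero)).natAbs) ∧
  (∀ k i j, 1 ≤ j → j ≤ d →
    ((σ k i).f (j : ℤ)).natAbs = ((((σ k i).f (d : ℤ)).natAbs + j - 1) % d) + 1) ∧
  (∀ k j, 1 ≤ j → j ≤ d → 0 ≤ (σ k 0).inv (j : ℤ))

/-! ## Generalized curves (diagonal edges allowed) -/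

/-- A generalized edge: `w ≠ v` and every coordinate changes by at most 1. -/
def IsGenEdge (d : ℕ) (v w : Pt) : Prop :=
  v ≠ w ∧ (∀ j, 1 ≤ j → j ≤ d → |w j - v j| ≤ 1) ∧ ∀ j, j = 0 ∨ d < j → w j = v j

/-- A generalized curve on the grid (diagonal edges allowed). -/
def IsGenCurve (d : ℕ) (c : List Pt) : Prop := c.Nodup ∧ c.Chain' (IsGenEdge d)

/-- Generalized inflation: vertices are replaced by 1-curves on the corresponding
subcubes, consecutive 1-curves being joined by a single (possibly diagonal) edge. -/
def IsGenInflation (d : ℕ) (A B : List Pt) : Prop :=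
  ∃ C : ℕ → List Pt,
    B = ((List.range A.length).map C).flatten ∧
    IsGenCurve d B ∧
    (∀ i, i < A.length → IsUnitCurveAt d (A.getD i ptZero) (C i))

/-! ## Auxiliary lemmas for STATEMENT 6 -/

section Aux

lemma length_grayRev (l : List ℤ) : (grayRev l).length = l.length := by
  simp [grayRev]

lemma G_length (d : ℕ) : (G d).length = 2 ^ d - 1 := by
  induction d with
  | zero => simp [G]
  | succ d ih =>
    have h1 : 1 ≤ 2 ^ d := Nat.one_le_two_pow
    simp only [G, List.length_append, length_grayRev, ih, List.length_singleton]
    rw [pow_succ]; omega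

lemma mem_grayRev {l : List ℤ} {e : ℤ} (h : e ∈ grayRev l) : -e ∈ l := by
  simp only [grayRev, List.mem_reverse, List.mem_map] at h
  obtain ⟨a, ha, rfl⟩ := h
  simpa using ha

lemma G_mem {d : ℕ} : ∀ {e : ℤ}, e ∈ G d → e ≠ 0 ∧ 1 ≤ e.natAbs ∧ e.natAbs ≤ d := by
  induction d with
  | zero => intro e h; simp [G] at h
  | succ d ih =>
    intro e h
    simp only [G, List.append_assoc, List.mem_append, List.mem_singleton] at h
    rcases h with h | h | h
    · obtain ⟨h1, h2, h3⟩ := ih h; exact ⟨h1, h2, by omega⟩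
    · subst h
      refine ⟨by exact_mod_cast (by omega : (d:ℤ) + 1 ≠ 0), ?_, ?_⟩ <;>
        · have : ((d:ℤ) + 1).natAbs = d + 1 := by
            rw [show (d:ℤ) + 1 = ((d+1 : ℕ) : ℤ) by push_cast; ring, Int.natAbs_cast]
          omega
    · obtain ⟨h1, h2, h3⟩ := ih (mem_grayRev h)
      rw [Int.natAbs_neg] at h2 h3
      refine ⟨fun h0 => h1 (by rw [h0]; ring), h2, by omega⟩

lemma G_take {m d : ℕ} (h : m ≤ d) : (G d).take (2 ^ m - 1) = G m := by
  induction d with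
  | zero =>
    have : m = 0 := by omega
    subst this; simp [G]
  | succ d ih =>
    rcases Nat.eq_or_lt_of_le h with rfl | h'
    · rw [List.take_of_length_le (by rw [G_length])]
    · have hm : m ≤ d := by omega
      have hlen : 2 ^ m - 1 ≤ (G d).length := by
        rw [G_length]
        have := Nat.pow_le_pow_right (show 1 ≤ 2 by norm_num) hm
        omega
      show ((G d ++ [((d:ℤ)+1)]) ++ grayRev (G d)).take (2 ^ m - 1) = G m
      rw [List.take_append_of_le_length (by simp; omega),
        List.take_append_of_le_length hlen, ih hm]

lemma G_drop {m d : ℕ} (h : m < d) : (G d).drop (2 ^ d - 2 ^ m) = grayRev (G m) := by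
  have hm : m ≤ d - 1 := by omega
  obtain ⟨d, rfl⟩ : ∃ d', d = d' + 1 := ⟨d - 1, by omega⟩
  have hm' : m ≤ d := by omega
  have hpm : 2 ^ m ≤ 2 ^ d := Nat.pow_le_pow_right (by norm_num) hm'
  have h1 : 1 ≤ 2 ^ m := Nat.one_le_two_pow
  show ((G d ++ [((d:ℤ)+1)]) ++ grayRev (G d)).drop (2 ^ (d+1) - 2 ^ m) = grayRev (G m)
  have hlen : (G d ++ [((d:ℤ)+1)]).length = 2 ^ d := by
    simp [G_length]; omega
  have hidx : 2 ^ (d+1) - 2 ^ m = (G d ++ [((d:ℤ)+1)]).length + (2 ^ d - 2 ^ m) := by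
    rw [hlen, pow_succ]; omega
  rw [hidx, List.drop_length_add_append]
  show (List.reverse _).drop _ = _
  rw [List.drop_reverse]
  have hl2 : ((G d).map (fun x => -x)).length - (2 ^ d - 2 ^ m) = 2 ^ m - 1 := by
    simp [G_length]; omega
  rw [hl2, ← List.map_take, G_take hm']
  rfl

lemma move_apply_ne (v : Pt) (e : ℤ) (j : ℕ) (h : j ≠ e.natAbs) : move v e j = v j :=
  if_neg h

lemma move_apply_abs (v : Pt) (e : ℤ) : move v e e.natAbs = v e.natAbs + e.sign :=
  if_pos rfl

lemma move_comm (v : Pt) (a b : ℤ) : move (move v a) b = move (move v b) a := by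
  funext j
  simp only [move]
  split_ifs <;> ring

lemma move_move_neg (v : Pt) (e : ℤ) : move (move v e) (-e) = v := by
  funext j
  simp only [move, Int.natAbs_neg, Int.sign_neg]
  split_ifs <;> ring

lemma pathVertices_length (x : Pt) (l : List ℤ) : (pathVertices x l).length = l.length + 1 :=
  List.length_scanl

lemma pathVertices_cons (x : Pt) (e : ℤ) (l : List ℤ) :
    pathVertices x (e :: l) = x :: pathVertices (move x e) l := by
  simp [pathVertices, List.scanl_cons]

lemma pathVertices_eq_cons (x : Pt) (l : List ℤ) :
    pathVertices x l = x :: (pathVertices x l).tail := by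
  cases l <;> simp [pathVertices, List.scanl_cons]

lemma pathVertices_ne_nil (x : Pt) (l : List ℤ) : pathVertices x l ≠ [] := by
  rw [pathVertices_eq_cons]; simp

lemma getLastD_ne_nil {l : List Pt} (h : l ≠ []) (a b : Pt) : l.getLastD a = l.getLastD b := by
  rw [List.getLastD_eq_getLast?, List.getLastD_eq_getLast?, List.getLast?_eq_getLast h]
  simp

lemma pathVertices_append (l1 : List ℤ) : ∀ (x : Pt) (l2 : List ℤ),
    pathVertices x (l1 ++ l2) =
      pathVertices x l1 ++ (pathVertices ((pathVertices x l1).getLastD ptZero) l2).tail := by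
  induction l1 with
  | nil =>
    intro x l2
    simp only [List.nil_append]
    show pathVertices x l2 = [x] ++ (pathVertices (List.getLastD [x] ptZero) l2).tail
    simp only [List.getLastD]
    rw [pathVertices_eq_cons x l2]; rfl
  | cons e l1 ih =>
    intro x l2
    rw [List.cons_append, pathVertices_cons, ih, pathVertices_cons]
    have hne := pathVertices_ne_nil (move x e) l1
    rw [show (x :: pathVertices (move x e) l1).getLastD ptZero
        = (pathVertices (move x e) l1).getLastD ptZero from by
      rw [List.getLastD_cons]; exact getLastD_ne_nil hne x ptZero]
    rfl

lemma pathVertices_concat (x : Pt) (l : List ℤ) (e : ℤ) :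
    pathVertices x (l ++ [e]) =
      pathVertices x l ++ [move ((pathVertices x l).getLastD ptZero) e] := by
  rw [pathVertices_append]
  simp [pathVertices, List.scanl_cons]

lemma grayRev_concat (l : List ℤ) (e : ℤ) : grayRev (l ++ [e]) = -e :: grayRev l := by
  simp [grayRev]

lemma pathVertices_grayRev (l : List ℤ) : ∀ x : Pt,
    pathVertices ((pathVertices x l).getLastD ptZero) (grayRev l) = (pathVertices x l).reverse := by
  induction l using List.reverseRecOn with
  | nil => intro x; simp [pathVertices, grayRev]
  | append_singleton l e ih =>
    intro x
    rw [pathVertices_concat, List.getLastD_concat, grayRev_concat, pathVertices_cons,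
      move_move_neg, ih x, List.reverse_append]
    simp

lemma map_grayRev (f : ℤ → ℤ) (hodd : ∀ i : ℤ, f (-i) = -f i) (l : List ℤ) :
    (grayRev l).map f = grayRev (l.map f) := by
  simp only [grayRev, List.map_reverse, List.map_map]
  congr 2
  funext i
  exact hodd i

end Aux


section Aux2

lemma getD_mem' {α : Type*} (l : List α) (n : ℕ) (h : n < l.length) (d₀ : α) :
    l.getD n d₀ ∈ l := by
  rw [List.getD_eq_getElem _ _ h]; exact List.getElem_mem h

lemma getD_map' (l : List ℤ) (f : ℤ → ℤ) (r : ℕ) (h : r < l.length) :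
    (l.map f).getD r 0 = f (l.getD r 0) := by
  rw [List.getD_eq_getElem _ _ (by simpa using h), List.getD_eq_getElem _ _ h, List.getElem_map]

lemma getD_drop' (l : List ℤ) (k n : ℕ) (h : k + n < l.length) :
    (l.drop k).getD n 0 = l.getD (k + n) 0 := by
  rw [List.getD_eq_getElem _ _ (by simp; omega), List.getD_eq_getElem _ _ h, List.getElem_drop]

lemma getD_take' (l : List ℤ) (k n : ℕ) (h1 : n < k) (h2 : n < l.length) :
    (l.take k).getD n 0 = l.getD n 0 := by
  rw [List.getD_eq_getElem _ _ (by simp; omega), List.getD_eq_getElem _ _ h2, List.getElem_take]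

lemma getD_append_left' (l1 l2 : List Pt) (n : ℕ) (h : n < l1.length) :
    (l1 ++ l2).getD n ptZero = l1.getD n ptZero := by
  rw [List.getD_eq_getElem _ _ (by simp; omega), List.getD_eq_getElem _ _ h,
    List.getElem_append_left]

lemma getD_append_right' (l1 l2 : List Pt) (n : ℕ) (h1 : l1.length ≤ n)
    (h2 : n < l1.length + l2.length) :
    (l1 ++ l2).getD n ptZero = l2.getD (n - l1.length) ptZero := by
  rw [List.getD_eq_getElem _ _ (by simp; omega), List.getD_eq_getElem _ _ (by omega),
    List.getElem_append_right h1]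

lemma pathVertices_getD_zero (x : Pt) (l : List ℤ) : (pathVertices x l).getD 0 ptZero = x := by
  rw [pathVertices_eq_cons]; rfl

lemma pathVertices_getD_succ : ∀ (l : List ℤ) (x : Pt) (r : ℕ), r < l.length →
    (pathVertices x l).getD (r + 1) ptZero
      = move ((pathVertices x l).getD r ptZero) (l.getD r 0) := by
  intro l
  induction l with
  | nil => intro x r hr; simp at hr
  | cons e l ih =>
    intro x r hr
    rw [pathVertices_cons]
    cases r with
    | zero =>
      show (pathVertices (move x e) l).getD 0 ptZero = move x e
      exact pathVertices_getD_zero _ _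
    | succ r =>
      show (pathVertices (move x e) l).getD (r + 1) ptZero
        = move ((pathVertices (move x e) l).getD r ptZero) (l.getD r 0)
      exact ih (move x e) r (by simpa using hr)

lemma grayCube (f : ℤ → ℤ) (hodd : ∀ i : ℤ, f (-i) = -f i) :
    ∀ d : ℕ, (∀ p q : ℕ, 1 ≤ p → p ≤ d → 1 ≤ q → q ≤ d →
        (f (p : ℤ)).natAbs = (f (q : ℤ)).natAbs → p = q) →
    ∀ x : Pt,
      (∀ u ∈ pathVertices x ((G d).map f), ∀ j : ℕ,
        ((∀ t : ℕ, 1 ≤ t → t ≤ d → (f (t : ℤ)).natAbs ≠ j) → u j = x j) ∧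
        (∀ t : ℕ, 1 ≤ t → t ≤ d → (f (t : ℤ)).natAbs = j →
          u j = x j ∨ u j = x j + (f (t : ℤ)).sign)) ∧
      (pathVertices x ((G d).map f)).getLastD ptZero
        = if d = 0 then x else move x (f (d : ℤ)) := by
  intro d
  induction d with
  | zero =>
    intro _ x
    constructor
    · intro u hu j
      have hu' : u = x := by simpa [G, pathVertices] using hu
      subst hu'
      exact ⟨fun _ => rfl, fun t h1 h2 _ => absurd h2 (by omega)⟩
    · simp [G, pathVertices]
  | succ d ih =>
    intro hinj x
    have hinj' : ∀ p q : ℕ, 1 ≤ p → p ≤ d → 1 ≤ q → q ≤ d →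
        (f (p : ℤ)).natAbs = (f (q : ℤ)).natAbs → p = q :=
      fun p q h1 h2 h3 h4 h5 => hinj p q h1 (by omega) h3 (by omega) h5
    have IH := ih hinj'
    have hcast : ((d + 1 : ℕ) : ℤ) = (d : ℤ) + 1 := by push_cast; ring
    have hlist : (G (d+1)).map f = (G d).map f ++ (f ((d : ℤ) + 1) :: grayRev ((G d).map f)) := by
      show ((G d ++ [((d : ℤ)+1)]) ++ grayRev (G d)).map f = _
      rw [List.map_append, List.map_append, map_grayRev f hodd]
      simp
    set L1 := (G d).map f with hL1
    set y := (pathVertices x L1).getLastD ptZero with hy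
    set x' := move x (f ((d : ℤ) + 1)) with hx'
    have hy' : move y (f ((d : ℤ) + 1)) = (pathVertices x' L1).getLastD ptZero := by
      by_cases hd : d = 0
      · subst hd
        have h1 := (IH x).2
        have h2 := (IH x').2
        rw [if_pos rfl] at h1 h2
        rw [hy, h1, h2]
      · have h1 := (IH x).2
        have h2 := (IH x').2
        simp only [if_neg hd] at h1 h2
        rw [hy, h1, h2, move_comm]
    have hdecomp : pathVertices x ((G (d+1)).map f)
        = pathVertices x L1 ++ (pathVertices x' L1).reverse := by
      rw [hlist, pathVertices_append, pathVertices_cons]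
      rw [List.tail_cons, ← hy, hy', pathVertices_grayRev]
    have hxj : ∀ j : ℕ, j ≠ (f ((d : ℤ) + 1)).natAbs → x' j = x j :=
      fun j hj => move_apply_ne x _ j hj
    constructor
    · intro u hu j
      rw [hdecomp, List.mem_append, List.mem_reverse] at hu
      constructor
      · intro hnone
        rcases hu with hu | hu
        · exact ((IH x).1 u hu j).1 (fun t h1 h2 => hnone t h1 (by omega))
        · have h1 := ((IH x').1 u hu j).1 (fun t h1 h2 => hnone t h1 (by omega))
          rw [h1]
          exact hxj j (fun hj => hnone (d+1) (by omega) (le_refl _) (by rw [hcast, ← hj]))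
      · intro t h1 h2 hj
        by_cases htd : t = d + 1
        · subst htd
          rw [hcast] at hj
          have hne : ∀ t' : ℕ, 1 ≤ t' → t' ≤ d → (f (t' : ℤ)).natAbs ≠ j := by
            intro t' ht1 ht2 heq
            have := hinj t' (d+1) ht1 (by omega) (by omega) (le_refl _)
              (by rw [heq, ← hj, hcast])
            omega
          rcases hu with hu | hu
          · left; exact ((IH x).1 u hu j).1 hne
          · right
            have h1 := ((IH x').1 u hu j).1 hne
            rw [h1, hx', ← hj, move_apply_abs, hcast]
        · have htd' : t ≤ d := by omega
          have hne : j ≠ (f ((d : ℤ) + 1)).natAbs := by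
            intro hj2
            exact htd (hinj t (d+1) h1 (by omega) (by omega) (le_refl _)
              (by rw [hj, hj2, hcast]))
          rcases hu with hu | hu
          · exact ((IH x).1 u hu j).2 t h1 htd' hj
          · have hx'j : x' j = x j := hxj j hne
            rcases ((IH x').1 u hu j).2 t h1 htd' hj with h | h
            · left; rw [h, hx'j]
            · right; rw [h, hx'j]
    · rw [hdecomp, pathVertices_eq_cons x' L1]
      rw [List.reverse_cons, ← List.append_assoc, List.getLastD_concat]
      rw [if_neg (by omega : ¬ d + 1 = 0), hx', hcast]

lemma sp_natAbs_map {d : ℕ} (σ : SignedPerm d) (q : ℤ) (hq : q ≠ 0) :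
    (σ.f q).natAbs = (σ.f (q.natAbs : ℤ)).natAbs := by
  rcases lt_or_gt_of_ne hq with h | h
  · have : (q.natAbs : ℤ) = -q := by omega
    rw [this, σ.neg, Int.natAbs_neg]
  · have : (q.natAbs : ℤ) = q := by omega
    rw [this]

lemma sp_inj {d : ℕ} (σ : SignedPerm d) : ∀ p q : ℕ, 1 ≤ p → p ≤ d → 1 ≤ q → q ≤ d →
    (σ.f (p : ℤ)).natAbs = (σ.f (q : ℤ)).natAbs → p = q := by
  intro p q hp1 hp2 hq1 hq2 h
  have hdp : IsDir d (p : ℤ) := ⟨by exact_mod_cast (by omega : p ≠ 0), by simpa using hp2⟩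
  have hdq : IsDir d (q : ℤ) := ⟨by exact_mod_cast (by omega : q ≠ 0), by simpa using hq2⟩
  rcases Int.natAbs_eq_natAbs_iff.mp h with h' | h'
  · have := congrArg σ.inv h'
    rw [σ.left_inv _ hdp, σ.left_inv _ hdq] at this
    exact_mod_cast this
  · have := congrArg σ.inv h'
    rw [σ.left_inv _ hdp, σ.neg_inv, σ.left_inv _ hdq] at this
    omega

end Aux2


section Aux3

lemma grayPiece_mem {d : ℕ} (σ : SignedPerm d) (v : Pt) (u : Pt)
    (hu : u ∈ grayPiece d σ v) (j : ℕ) (h1 : 1 ≤ j) (h2 : j ≤ d) :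
    u j = 2 * v j ∨ u j = 2 * v j + 1 := by
  have H := (grayCube σ.f σ.neg d (sp_inj σ)
    (fun j' => 2 * v j' + if 1 ≤ j' ∧ j' ≤ d then flipped (σ.inv (j' : ℤ)) else 0)).1 u hu j
  rw [if_pos (show 1 ≤ j ∧ j ≤ d from ⟨h1, h2⟩)] at H
  have hdj : IsDir d (j : ℤ) := ⟨by exact_mod_cast (by omega : j ≠ 0), by simpa using h2⟩
  have hinv := σ.maps_inv _ hdj
  have hfi : σ.f (σ.inv (j : ℤ)) = (j : ℤ) := σ.right_inv _ hdj
  rcases lt_or_gt_of_ne hinv.1 with hneg | hpos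
  · -- σ.inv j < 0
    have ht : (((σ.inv (j : ℤ)).natAbs : ℕ) : ℤ) = -(σ.inv (j : ℤ)) := by omega
    have hval : σ.f (((σ.inv (j : ℤ)).natAbs : ℕ) : ℤ) = -(j : ℤ) := by
      rw [ht, σ.neg, hfi]
    have habs : (σ.f (((σ.inv (j : ℤ)).natAbs : ℕ) : ℤ)).natAbs = j := by
      rw [hval, Int.natAbs_neg, Int.natAbs_cast]
    have hsgn : (σ.f (((σ.inv (j : ℤ)).natAbs : ℕ) : ℤ)).sign = -1 := by
      rw [hval]; exact Int.sign_eq_neg_one_of_neg (by exact_mod_cast (by omega : -(j:ℤ) < 0))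
    have := H.2 (σ.inv (j : ℤ)).natAbs (by omega) hinv.2 habs
    rw [hsgn] at this
    have hfl : flipped (σ.inv (j : ℤ)) = 1 := if_pos hneg
    rw [hfl] at this
    omega
  · -- σ.inv j > 0
    have ht : (((σ.inv (j : ℤ)).natAbs : ℕ) : ℤ) = σ.inv (j : ℤ) := by omega
    have hval : σ.f (((σ.inv (j : ℤ)).natAbs : ℕ) : ℤ) = (j : ℤ) := by rw [ht, hfi]
    have habs : (σ.f (((σ.inv (j : ℤ)).natAbs : ℕ) : ℤ)).natAbs = j := by
      rw [hval, Int.natAbs_cast]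
    have hsgn : (σ.f (((σ.inv (j : ℤ)).natAbs : ℕ) : ℤ)).sign = 1 := by
      rw [hval]; exact Int.sign_eq_one_of_pos (by exact_mod_cast (by omega : 0 < (j:ℤ)))
    have := H.2 (σ.inv (j : ℤ)).natAbs (by omega) hinv.2 habs
    rw [hsgn] at this
    have hfl : flipped (σ.inv (j : ℤ)) = 0 := if_neg (by omega)
    rw [hfl] at this
    omega

lemma flat_length (P : ℕ → List Pt) (L : ℕ) (hP : ∀ i, (P i).length = L) :
    ∀ N, (((List.range N).map P).flatten).length = N * L := by
  intro N
  induction N with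
  | zero => simp
  | succ N ih =>
    rw [List.range_succ, List.map_append, List.flatten_append]
    simp only [List.length_append, ih, List.map_cons, List.map_nil, List.flatten_cons,
      List.flatten_nil, List.append_nil, hP]
    ring

lemma flat_getD (P : ℕ → List Pt) (L : ℕ) (hP : ∀ i, (P i).length = L) :
    ∀ N i r, i < N → r < L →
      (((List.range N).map P).flatten).getD (i * L + r) ptZero = (P i).getD r ptZero := by
  intro N
  induction N with
  | zero => intro i r hi; omega
  | succ N ih =>
    intro i r hi hr
    rw [List.range_succ, List.map_append, List.flatten_append]
    have hlen := flat_length P L hP N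
    rcases Nat.lt_or_ge i N with h | h
    · rw [getD_append_left' _ _ _ (by
        rw [hlen]
        calc i * L + r < i * L + L := by omega
        _ = (i+1) * L := by ring
        _ ≤ N * L := mul_le_mul_left (by omega) L)]
      exact ih i r h hr
    · have hiN : i = N := by omega
      subst hiN
      rw [getD_append_right' _ _ _ (by rw [hlen]; omega) (by
        simp only [hlen, List.map_cons, List.map_nil, List.flatten_cons, List.flatten_nil,
          List.append_nil, List.length_append, hP]
        omega)]
      simp only [List.map_cons, List.map_nil, List.flatten_cons, List.flatten_nil,
        List.append_nil, hlen]
      rw [show i * L + r - i * L = r by omega]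

lemma axesOfEdge_move (d : ℕ) (v : Pt) (e : ℤ) (h0 : e ≠ 0) (hle : e.natAbs ≤ d) :
    axesOfEdge d v (move v e) = {e.natAbs} := by
  have hsgn : e.sign ≠ 0 := fun h => h0 (Int.sign_eq_zero_iff_zero.mp h)
  ext j
  simp only [axesOfEdge, Finset.mem_filter, Finset.mem_range, Finset.mem_singleton]
  simp only [move]
  constructor
  · rintro ⟨hj, hne⟩
    by_contra h
    exact hne (by rw [if_neg h])
  · rintro rfl
    refine ⟨by omega, ?_⟩
    rw [if_pos rfl]
    omega

lemma chain'_getD {d : ℕ} {c : List Pt} (h : c.Chain' (IsEdge d)) (g : ℕ)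
    (hg : g + 1 < c.length) :
    IsEdge d (c.getD g ptZero) (c.getD (g + 1) ptZero) := by
  replace h := List.isChain_iff_getElem.mp h
  have := h g (by omega)
  rw [List.getD_eq_getElem _ _ (by omega), List.getD_eq_getElem _ _ hg]
  simpa [List.get_eq_getElem] using this

lemma biUnion_subset_of_forall {M : ℕ} {F : Finset ℕ} {f : ℕ → Finset ℕ}
    (h : ∀ t, t < M → f t ⊆ F) : (Finset.range M).biUnion f ⊆ F := by
  intro a ha
  obtain ⟨t, ht, hat⟩ := Finset.mem_biUnion.mp ha
  exact h t (Finset.mem_range.mp ht) hat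

end Aux3

/-- every `2^n` consecutive edges of a well-folded hyperorthogonal
curve (for `n ∈ {0,…,d−2}`) lie inside an `(n+1)`-dimensional unit cube: an
axis-aligned box with side length 1 in exactly `n+1` coordinates (a set `S` of
axes) and side length 0 in the remaining coordinates. -/
theorem window_in_unit_cube (d n : ℕ) (hd : 2 ≤ d) (hn : n ≤ d - 2)
    (c : List Pt) (hwf : WellFolded d c) (hho : Hyperorthogonal d c)
    (s : ℕ) (hs : s + 2 ^ n + 1 ≤ c.length) :
    ∃ S : Finset ℕ, S.card = n + 1 ∧ (∀ a ∈ S, 1 ≤ a ∧ a ≤ d) ∧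
      ∃ base : Pt, ∀ t, t ≤ 2 ^ n → ∀ j,
        (j ∈ S → (c.getD (s + t) ptZero) j = base j ∨
          (c.getD (s + t) ptZero) j = base j + 1) ∧
        (j ∉ S → (c.getD (s + t) ptZero) j = base j) := by
  classical
  have h2n : 1 ≤ 2 ^ n := Nat.one_le_two_pow
  cases hwf with
  | single v =>
    simp only [List.length_singleton] at hs
    omega
  | inflate hA hinfl =>
    obtain ⟨σ, hc, hgc⟩ := hinfl
    rename_i A
    have hPlen : ∀ i : ℕ, (grayPiece d (σ i) (A.getD i ptZero)).length = 2 ^ d := by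
      intro i
      show (pathVertices _ _).length = 2 ^ d
      rw [pathVertices_length, List.length_map, G_length]
      have : 1 ≤ 2 ^ d := Nat.one_le_two_pow
      omega
    have hclen : c.length = A.length * 2 ^ d := by
      rw [hc]; exact flat_length _ _ hPlen A.length
    have hgetD : ∀ i r, i < A.length → r < 2 ^ d →
        c.getD (i * 2 ^ d + r) ptZero = (grayPiece d (σ i) (A.getD i ptZero)).getD r ptZero := by
      intro i r hi hr
      rw [hc]; exact flat_getD _ _ hPlen A.length i r hi hr
    have hedge : ∀ g, g + 1 < c.length → ∃ e : ℤ, e ≠ 0 ∧ e.natAbs ≤ d ∧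
        c.getD (g + 1) ptZero = move (c.getD g ptZero) e := by
      intro g hg
      obtain ⟨e, ⟨h0, hle⟩, hmv⟩ := chain'_getD hgc.2 g hg
      exact ⟨e, h0, hle, hmv⟩
    have hinternal : ∀ i r, i < A.length → r + 1 < 2 ^ d →
        c.getD (i * 2 ^ d + r + 1) ptZero
          = move (c.getD (i * 2 ^ d + r) ptZero) ((σ i).f ((G d).getD r 0)) := by
      intro i r hi hr
      have hGlen : r < ((G d).map (σ i).f).length := by
        rw [List.length_map, G_length]; omega
      have h1 : c.getD (i * 2 ^ d + (r + 1)) ptZero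
          = (grayPiece d (σ i) (A.getD i ptZero)).getD (r + 1) ptZero :=
        hgetD i (r + 1) hi hr
      have h2 := hgetD i r hi (by omega)
      rw [show i * 2 ^ d + r + 1 = i * 2 ^ d + (r + 1) from by omega, h1, h2]
      show (pathVertices _ _).getD (r + 1) ptZero = _
      rw [pathVertices_getD_succ _ _ r hGlen, getD_map' _ _ r (by rw [G_length]; omega)]
      rfl
    have hdirInt : ∀ i r, r < 2 ^ d - 1 →
        ((σ i).f ((G d).getD r 0)) ≠ 0 ∧ ((σ i).f ((G d).getD r 0)).natAbs ≤ d := by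
      intro i r hr
      have hmem : (G d).getD r 0 ∈ G d := getD_mem' _ _ (by rw [G_length]; omega) 0
      obtain ⟨hb1, _, hb3⟩ := G_mem hmem
      exact ⟨((σ i).maps _ ⟨hb1, hb3⟩).1, ((σ i).maps _ ⟨hb1, hb3⟩).2⟩
    have hcube : ∀ i g, i < A.length → i * 2 ^ d ≤ g → g < i * 2 ^ d + 2 ^ d →
        ∀ j, 1 ≤ j → j ≤ d →
          c.getD g ptZero j = 2 * (A.getD i ptZero) j ∨
          c.getD g ptZero j = 2 * (A.getD i ptZero) j + 1 := by
      intro i g hi hg1 hg2 j hj1 hj2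
      have h3 := hgetD i (g - i * 2 ^ d) hi (by omega)
      rw [show i * 2 ^ d + (g - i * 2 ^ d) = g from by omega] at h3
      rw [h3]
      exact grayPiece_mem (σ i) _ _
        (getD_mem' _ _ (by rw [hPlen]; omega) ptZero) j hj1 hj2
    set Sset := (Finset.range (2 ^ n)).biUnion
      (fun t => axesOfEdge d (c.getD (s + t) ptZero) (c.getD (s + t + 1) ptZero)) with hSdef
    have hScard : Sset.card = n + 1 := hho n hn s hs
    have haxS : ∀ t, t < 2 ^ n → ∀ e : ℤ, e ≠ 0 → e.natAbs ≤ d →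
        c.getD (s + t + 1) ptZero = move (c.getD (s + t) ptZero) e → e.natAbs ∈ Sset := by
      intro t ht e h0 hle hmv
      apply Finset.mem_biUnion.mpr
      exact ⟨t, Finset.mem_range.mpr ht,
        by rw [hmv, axesOfEdge_move d _ e h0 hle]; exact Finset.mem_singleton_self _⟩
    have hSbd : ∀ b ∈ Sset, 1 ≤ b ∧ b ≤ d := by
      intro b hb
      obtain ⟨t, ht, hbt⟩ := Finset.mem_biUnion.mp hb
      rw [Finset.mem_range] at ht
      obtain ⟨e, h0, hle, hmv⟩ := hedge (s + t) (by omega)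
      rw [hmv, axesOfEdge_move d _ e h0 hle, Finset.mem_singleton] at hbt
      subst hbt
      exact ⟨by omega, hle⟩
    have hconst : ∀ j, j ∉ Sset → ∀ t, t ≤ 2 ^ n →
        c.getD (s + t) ptZero j = c.getD s ptZero j := by
      intro j hj t
      induction t with
      | zero => intro _; rw [Nat.add_zero]
      | succ t ih =>
        intro ht
        obtain ⟨e, h0, hle, hmv⟩ := hedge (s + t) (by omega)
        have hin : e.natAbs ∈ Sset := haxS t (by omega) e h0 hle hmv
        rw [show s + (t + 1) = s + t + 1 from by omega, hmv,
          move_apply_ne _ _ _ (fun h => hj (by rw [h]; exact hin))]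
        exact ih (by omega)
    have hpd : 1 ≤ 2 ^ d := Nat.one_le_two_pow
    have hnd : 2 ^ n < 2 ^ d := Nat.pow_lt_pow_right (by norm_num) (by omega)
    set i0 := s / 2 ^ d with hi0def
    have hdm := Nat.div_add_mod' s (2 ^ d)
    rw [← hi0def] at hdm
    have hmod := Nat.mod_lt s (show 0 < 2 ^ d from hpd)
    have hq1 : i0 * 2 ^ d ≤ s := by omega
    have hq2 : s < i0 * 2 ^ d + 2 ^ d := by omega
    have hq2d : (i0 + 1) * 2 ^ d = i0 * 2 ^ d + 2 ^ d := by ring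
    have hi0 : i0 < A.length := by
      by_contra hcon
      have := mul_le_mul_left (show A.length ≤ i0 from by omega) (2 ^ d)
      omega
    refine ⟨Sset, hScard, hSbd, ?_⟩
    rcases Nat.lt_or_ge (s + 2 ^ n) ((i0 + 1) * 2 ^ d) with hcase | hcase
    · -- the window lies in a single piece
      refine ⟨fun j => if j ∈ Sset then 2 * (A.getD i0 ptZero) j else c.getD s ptZero j, ?_⟩
      intro t ht j
      constructor
      · intro hjS
        simp only [if_pos hjS]
        obtain ⟨hj1, hj2⟩ := hSbd j hjS
        exact hcube i0 (s + t) hi0 (by omega) (by omega) j hj1 hj2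
      · intro hjS
        simp only [if_neg hjS]
        exact hconst j hjS t ht
    · -- the window straddles two pieces
      have hi1 : i0 + 1 < A.length := by
        by_contra hcon
        have := mul_le_mul_left (show A.length ≤ i0 + 1 from by omega) (2 ^ d)
        omega
      have hlenB : i0 * 2 ^ d + 2 ^ d + 2 ^ d ≤ c.length := by
        have := mul_le_mul_left (show i0 + 2 ≤ A.length from by omega) (2 ^ d)
        have h22 : (i0 + 2) * 2 ^ d = i0 * 2 ^ d + 2 ^ d + 2 ^ d := by ring
        omega
      obtain ⟨e, he0, hele, hemv⟩ := hedge (i0 * 2 ^ d + 2 ^ d - 1) (by omega)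
      rw [show i0 * 2 ^ d + 2 ^ d - 1 + 1 = i0 * 2 ^ d + 2 ^ d from by omega] at hemv
      have haS : e.natAbs ∈ Sset := by
        apply Finset.mem_biUnion.mpr
        refine ⟨i0 * 2 ^ d + 2 ^ d - 1 - s, Finset.mem_range.mpr (by omega), ?_⟩
        rw [show s + (i0 * 2 ^ d + 2 ^ d - 1 - s) = i0 * 2 ^ d + 2 ^ d - 1 from by omega,
          show i0 * 2 ^ d + 2 ^ d - 1 + 1 = i0 * 2 ^ d + 2 ^ d from by omega,
          hemv, axesOfEdge_move d _ e he0 hele]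
        exact Finset.mem_singleton_self _
      have claimL : ∀ g, s ≤ g → g + 1 ≤ i0 * 2 ^ d + 2 ^ d - 1 →
          c.getD (g + 1) ptZero e.natAbs = c.getD g ptZero e.natAbs := by
        intro g hg hgB
        have hmv := hinternal i0 (g - i0 * 2 ^ d) hi0 (by omega)
        rw [show i0 * 2 ^ d + (g - i0 * 2 ^ d) = g from by omega] at hmv
        by_cases hax : ((σ i0).f ((G d).getD (g - i0 * 2 ^ d) 0)).natAbs = e.natAbs
        · exfalso
          set D := i0 * 2 ^ d + 2 ^ d - 1 - g with hDdef
          have hD1 : 1 ≤ D := by omega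
          have hD2 : D ≤ 2 ^ n - 1 := by omega
          set m := Nat.log 2 D + 1 with hmdef
          have hm1 : 2 ^ (m - 1) ≤ D := by
            have := Nat.pow_log_le_self 2 (show D ≠ 0 from by omega)
            simpa [hmdef] using this
          have hm2 : D < 2 ^ m := Nat.lt_pow_succ_log_self (by norm_num) D
          have hmn : m ≤ n := by
            have h' : 2 ^ (m - 1) < 2 ^ n := by omega
            have := (Nat.pow_lt_pow_iff_right (show 1 < 2 from by norm_num)).mp h'
            omega
          have hpmn : 2 ^ m ≤ 2 ^ n := Nat.pow_le_pow_right (by norm_num) hmn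
          have hmd : m < d := by omega
          have hpmd : 2 ^ m < 2 ^ d := Nat.pow_lt_pow_right (by norm_num) hmd
          set T := (Finset.Icc 1 m).image (fun t : ℕ => ((σ i0).f (t : ℤ)).natAbs) with hTdef
          have hcardT : T.card ≤ m :=
            le_trans Finset.card_image_le (by rw [Nat.card_Icc]; omega)
          have hmemT : ∀ p : ℕ, 2 ^ d - 2 ^ m ≤ p → p < 2 ^ d - 1 →
              ((σ i0).f ((G d).getD p 0)).natAbs ∈ T := by
            intro p hp1 hp2
            have hg1 : (G d).getD p 0 = (grayRev (G m)).getD (p - (2 ^ d - 2 ^ m)) 0 := by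
              rw [← G_drop hmd, getD_drop' _ _ _ (by rw [G_length]; omega),
                show 2 ^ d - 2 ^ m + (p - (2 ^ d - 2 ^ m)) = p from by omega]
            have hmem : (G d).getD p 0 ∈ grayRev (G m) := by
              rw [hg1]
              exact getD_mem' _ _ (by rw [length_grayRev, G_length]; omega) 0
            obtain ⟨hb1, hb2, hb3⟩ := G_mem (mem_grayRev hmem)
            rw [Int.natAbs_neg] at hb2 hb3
            rw [sp_natAbs_map (σ i0) _ (fun hz => hb1 (by rw [hz]; ring))]
            exact Finset.mem_image.mpr ⟨_, Finset.mem_Icc.mpr ⟨hb2, hb3⟩, rfl⟩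
          have haT : e.natAbs ∈ T := by
            rw [← hax]
            exact hmemT (g - i0 * 2 ^ d) (by omega) (by omega)
          have hHO := hho m (by omega) (i0 * 2 ^ d + 2 ^ d - 2 ^ m) (by omega)
          have hsubT : ∀ t, t < 2 ^ m →
              axesOfEdge d (c.getD (i0 * 2 ^ d + 2 ^ d - 2 ^ m + t) ptZero)
                (c.getD (i0 * 2 ^ d + 2 ^ d - 2 ^ m + t + 1) ptZero) ⊆ T := by
            intro t ht
            rcases Nat.lt_or_ge t (2 ^ m - 1) with hlt | hge
            · have hmv2 := hinternal i0 (2 ^ d - 2 ^ m + t) hi0 (by omega)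
              rw [show i0 * 2 ^ d + 2 ^ d - 2 ^ m + t
                  = i0 * 2 ^ d + (2 ^ d - 2 ^ m + t) from by omega,
                hmv2, axesOfEdge_move d _ _ (hdirInt i0 _ (by omega)).1
                  (hdirInt i0 _ (by omega)).2]
              exact Finset.singleton_subset_iff.mpr (hmemT _ (by omega) (by omega))
            · have hteq : i0 * 2 ^ d + 2 ^ d - 2 ^ m + t = i0 * 2 ^ d + 2 ^ d - 1 := by omega
              rw [hteq, show i0 * 2 ^ d + 2 ^ d - 1 + 1 = i0 * 2 ^ d + 2 ^ d from by omega,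
                hemv, axesOfEdge_move d _ e he0 hele]
              exact Finset.singleton_subset_iff.mpr haT
          have hle' : m + 1 ≤ T.card := by
            rw [← hHO]
            exact Finset.card_le_card (biUnion_subset_of_forall hsubT)
          omega
        · rw [hmv, move_apply_ne _ _ _ (fun h => hax h.symm)]
      have claimR : ∀ g, i0 * 2 ^ d + 2 ^ d ≤ g → g + 1 ≤ s + 2 ^ n →
          c.getD (g + 1) ptZero e.natAbs = c.getD g ptZero e.natAbs := by
        intro g hg hgn
        have hmv := hinternal (i0 + 1) (g - (i0 * 2 ^ d + 2 ^ d)) hi1 (by omega)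
        rw [hq2d, show i0 * 2 ^ d + 2 ^ d + (g - (i0 * 2 ^ d + 2 ^ d)) = g from by omega] at hmv
        by_cases hax : ((σ (i0 + 1)).f ((G d).getD (g - (i0 * 2 ^ d + 2 ^ d)) 0)).natAbs
            = e.natAbs
        · exfalso
          set D := g - (i0 * 2 ^ d + 2 ^ d) + 1 with hDdef
          have hD1 : 1 ≤ D := by omega
          have hD2 : D ≤ 2 ^ n - 1 := by omega
          set m := Nat.log 2 D + 1 with hmdef
          have hm1 : 2 ^ (m - 1) ≤ D := by
            have := Nat.pow_log_le_self 2 (show D ≠ 0 from by omega)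
            simpa [hmdef] using this
          have hm2 : D < 2 ^ m := Nat.lt_pow_succ_log_self (by norm_num) D
          have hmn : m ≤ n := by
            have h' : 2 ^ (m - 1) < 2 ^ n := by omega
            have := (Nat.pow_lt_pow_iff_right (show 1 < 2 from by norm_num)).mp h'
            omega
          have hpmn : 2 ^ m ≤ 2 ^ n := Nat.pow_le_pow_right (by norm_num) hmn
          have hmd : m < d := by omega
          have hpmd : 2 ^ m < 2 ^ d := Nat.pow_lt_pow_right (by norm_num) hmd
          set T := (Finset.Icc 1 m).image (fun t : ℕ => ((σ (i0 + 1)).f (t : ℤ)).natAbs)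
            with hTdef
          have hcardT : T.card ≤ m :=
            le_trans Finset.card_image_le (by rw [Nat.card_Icc]; omega)
          have hmemT : ∀ p : ℕ, p < 2 ^ m - 1 →
              ((σ (i0 + 1)).f ((G d).getD p 0)).natAbs ∈ T := by
            intro p hp
            have hg1 : (G d).getD p 0 = (G m).getD p 0 := by
              rw [← G_take (show m ≤ d from by omega),
                getD_take' _ _ _ hp (by rw [G_length]; omega)]
            have hmem : (G d).getD p 0 ∈ G m := by
              rw [hg1]; exact getD_mem' _ _ (by rw [G_length]; omega) 0
            obtain ⟨hb1, hb2, hb3⟩ := G_mem hmem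
            rw [sp_natAbs_map (σ (i0 + 1)) _ hb1]
            exact Finset.mem_image.mpr ⟨_, Finset.mem_Icc.mpr ⟨hb2, hb3⟩, rfl⟩
          have haT : e.natAbs ∈ T := by
            rw [← hax]
            exact hmemT _ (by omega)
          have hHO := hho m (by omega) (i0 * 2 ^ d + 2 ^ d - 1) (by omega)
          have hsubT : ∀ t, t < 2 ^ m →
              axesOfEdge d (c.getD (i0 * 2 ^ d + 2 ^ d - 1 + t) ptZero)
                (c.getD (i0 * 2 ^ d + 2 ^ d - 1 + t + 1) ptZero) ⊆ T := by
            intro t ht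
            rcases Nat.eq_zero_or_pos t with rfl | hpos
            · rw [Nat.add_zero,
                show i0 * 2 ^ d + 2 ^ d - 1 + 1 = i0 * 2 ^ d + 2 ^ d from by omega,
                hemv, axesOfEdge_move d _ e he0 hele]
              exact Finset.singleton_subset_iff.mpr haT
            · have hmv2 := hinternal (i0 + 1) (t - 1) hi1 (by omega)
              rw [hq2d] at hmv2
              rw [show i0 * 2 ^ d + 2 ^ d - 1 + t
                  = i0 * 2 ^ d + 2 ^ d + (t - 1) from by omega,
                hmv2, axesOfEdge_move d _ _ (hdirInt (i0 + 1) _ (by omega)).1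
                  (hdirInt (i0 + 1) _ (by omega)).2]
              exact Finset.singleton_subset_iff.mpr (hmemT _ (by omega))
          have hle' : m + 1 ≤ T.card := by
            rw [← hHO]
            exact Finset.card_le_card (biUnion_subset_of_forall hsubT)
          omega
        · rw [hmv, move_apply_ne _ _ _ (fun h => hax h.symm)]
      have runL : ∀ k g, s ≤ g → g + k ≤ i0 * 2 ^ d + 2 ^ d - 1 →
          c.getD (g + k) ptZero e.natAbs = c.getD g ptZero e.natAbs := by
        intro k
        induction k with
        | zero => intro g _ _; rw [Nat.add_zero]
        | succ k ih =>
          intro g hg hk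
          rw [show g + (k + 1) = g + k + 1 from by omega,
            claimL (g + k) (by omega) (by omega), ih g hg (by omega)]
      have runR : ∀ k, i0 * 2 ^ d + 2 ^ d + k ≤ s + 2 ^ n →
          c.getD (i0 * 2 ^ d + 2 ^ d + k) ptZero e.natAbs
            = c.getD (i0 * 2 ^ d + 2 ^ d) ptZero e.natAbs := by
        intro k
        induction k with
        | zero => intro _; rw [Nat.add_zero]
        | succ k ih =>
          intro hk
          rw [show i0 * 2 ^ d + 2 ^ d + (k + 1) = i0 * 2 ^ d + 2 ^ d + k + 1 from by omega,
            claimR _ (by omega) (by omega), ih (by omega)]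
      have hsign : c.getD (i0 * 2 ^ d + 2 ^ d) ptZero e.natAbs
          = c.getD (i0 * 2 ^ d + 2 ^ d - 1) ptZero e.natAbs + e.sign := by
        rw [hemv, move_apply_abs]
      have hsgn : e.sign = 1 ∨ e.sign = -1 := by
        rcases lt_trichotomy e 0 with h | h | h
        · right; exact Int.sign_eq_neg_one_of_neg h
        · exact absurd h he0
        · left; exact Int.sign_eq_one_of_pos h
      refine ⟨fun j => if j = e.natAbs
          then min (c.getD (i0 * 2 ^ d + 2 ^ d - 1) ptZero e.natAbs)
            (c.getD (i0 * 2 ^ d + 2 ^ d) ptZero e.natAbs)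
          else if j ∈ Sset then 2 * (A.getD i0 ptZero) j else c.getD s ptZero j, ?_⟩
      intro t ht j
      constructor
      · intro hjS
        obtain ⟨hj1, hj2⟩ := hSbd j hjS
        by_cases hja : j = e.natAbs
        · subst hja
          simp only [eq_self_iff_true, if_true]
          rcases Nat.lt_or_ge (s + t) (i0 * 2 ^ d + 2 ^ d) with hgB | hgB
          · have h1 := runL (i0 * 2 ^ d + 2 ^ d - 1 - (s + t)) (s + t) (by omega) (by omega)
            rw [show s + t + (i0 * 2 ^ d + 2 ^ d - 1 - (s + t))
                = i0 * 2 ^ d + 2 ^ d - 1 from by omega] at h1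
            rcases hsgn with h | h <;> rw [h] at hsign <;> omega
          · have h1 := runR (s + t - (i0 * 2 ^ d + 2 ^ d)) (by omega)
            rw [show i0 * 2 ^ d + 2 ^ d + (s + t - (i0 * 2 ^ d + 2 ^ d))
                = s + t from by omega] at h1
            rcases hsgn with h | h <;> rw [h] at hsign <;> omega
        · simp only [if_neg hja, if_pos hjS]
          rcases Nat.lt_or_ge (s + t) (i0 * 2 ^ d + 2 ^ d) with hgB | hgB
          · exact hcube i0 (s + t) hi0 (by omega) (by omega) j hj1 hj2
          · have h1 := hcube (i0 + 1) (s + t) hi1 (by omega) (by omega) j hj1 hj2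
            have hbr : c.getD (i0 * 2 ^ d + 2 ^ d) ptZero j
                = c.getD (i0 * 2 ^ d + 2 ^ d - 1) ptZero j := by
              rw [hemv, move_apply_ne _ _ _ hja]
            have h2 := hcube i0 (i0 * 2 ^ d + 2 ^ d - 1) hi0 (by omega) (by omega) j hj1 hj2
            have h3 := hcube (i0 + 1) (i0 * 2 ^ d + 2 ^ d) hi1 (by omega) (by omega) j hj1 hj2
            omega
      · intro hjS
        simp only [if_neg (show j ≠ e.natAbs from fun h => hjS (by rw [h]; exact haS)), if_neg hjS]
        exact hconst j hjS t ht
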